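/- Assume M > 0. Then the function F is strictly decreasing and strictly convex on (M, +∞), with lim_{λ→+∞} F(λ) = 0 and lim_{λ→M⁺} F(λ) = +∞. -/

import Mathlib

open MeasureTheory Filter Set Topology intervalIntegral

lemma lip_mul {f g : ℝ → ℝ} {Kf Kg Af Ag : ℝ}
    (hf : ∀ x y, |f x - f y| ≤ Kf * |x - y|) (hg : ∀ x y, |g x - g y| ≤ Kg * |x - y|)
    (hAf : ∀ x, |f x| ≤ Af) (hAg : ∀ x, |g x| ≤ Ag) :
    ∀ x y, |f x * g x - f y * g y| ≤ (Af * Kg + Kf * Ag) * |x - y| := by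
  intro x y
  have e : f x * g x - f y * g y = f x * (g x - g y) + (f x - f y) * g y := by ring
  rw [e]
  calc |f x * (g x - g y) + (f x - f y) * g y|
      ≤ |f x * (g x - g y)| + |(f x - f y) * g y| := abs_add_le _ _
    _ = |f x| * |g x - g y| + |f x - f y| * |g y| := by rw [abs_mul, abs_mul]
    _ ≤ Af * (Kg * |x - y|) + Kf * |x - y| * Ag := by
        have h1 : |f x| * |g x - g y| ≤ Af * (Kg * |x - y|) :=
          mul_le_mul (hAf x) (hg x y) (abs_nonneg _) ((abs_nonneg _).trans (hAf x))
        have h2 : |f x - f y| * |g y| ≤ Kf * |x - y| * Ag :=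
          mul_le_mul (hf x y) (hAg y) (abs_nonneg _) ((abs_nonneg _).trans (hf x y))
        exact add_le_add h1 h2
    _ = (Af * Kg + Kf * Ag) * |x - y| := by ring

lemma lip_inv {f : ℝ → ℝ} {Kf ε : ℝ} (hε : 0 < ε) (hf : ∀ x, ε ≤ f x)
    (hl : ∀ x y, |f x - f y| ≤ Kf * |x - y|) :
    ∀ x y, |(f x)⁻¹ - (f y)⁻¹| ≤ Kf / ε ^ 2 * |x - y| := by
  intro x y
  have hfx : 0 < f x := lt_of_lt_of_le hε (hf x)
  have hfy : 0 < f y := lt_of_lt_of_le hε (hf y)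
  have e : (f x)⁻¹ - (f y)⁻¹ = (f y - f x) / (f x * f y) := by
    field_simp
  rw [e, abs_div, abs_of_pos (mul_pos hfx hfy)]
  rw [div_le_iff₀ (mul_pos hfx hfy)]
  have h1 : |f y - f x| ≤ Kf * |x - y| := by
    rw [abs_sub_comm] at *
    simpa [abs_sub_comm] using hl y x
  have h2 : ε ^ 2 ≤ f x * f y := by nlinarith [hf x, hf y]
  have hK : 0 ≤ Kf * |x - y| := le_trans (abs_nonneg _) h1
  calc |f y - f x| ≤ Kf * |x - y| := h1
    _ = Kf / ε ^ 2 * |x - y| * ε ^ 2 := by field_simp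
    _ ≤ Kf / ε ^ 2 * |x - y| * (f x * f y) := by
        gcongr
        have : 0 ≤ Kf * |x-y| / ε^2 := div_nonneg hK (by positivity)
        calc (0:ℝ) ≤ Kf * |x - y| / ε ^2 := this
          _ = Kf / ε ^ 2 * |x - y| := by ring

/-- FTC for Lipschitz functions with a.e. derivative. -/
lemma ftc_lip {G g : ℝ → ℝ} {K : ℝ} (hK : 0 ≤ K)
    (hlip : ∀ x y, |G x - G y| ≤ K * |x - y|)
    (hderiv : ∀ᵐ x ∂(volume : Measure ℝ), HasDerivAt G (g x) x)
    (a b : ℝ) :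
    ∫ x in a..b, g x = G b - G a := by
  have hGcont : Continuous G := by
    have : LipschitzWith ⟨K, hK⟩ G :=
      LipschitzWith.of_dist_le_mul (fun x y => by
        simp [Real.dist_eq]; exact hlip x y)
    exact this.continuous
  set h : ℕ → ℝ := fun n => ((n : ℝ) + 1)⁻¹ with hh
  have hpos : ∀ n, 0 < h n := fun n => by positivity
  have hh0 : Tendsto h atTop (𝓝 0) := by simpa [hh, one_div] using (tendsto_one_div_add_atTop_nhds_zero_nat : Tendsto (fun n : ℕ => 1 / ((n : ℝ) + 1)) atTop (𝓝 0))
  -- slope convergence helper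
  have slope_tendsto : ∀ (Φ : ℝ → ℝ) (y d : ℝ), HasDerivAt Φ d y →
      Tendsto (fun n => (Φ (y + h n) - Φ y) / h n) atTop (𝓝 d) := by
    intro Φ y d hd
    have h1 : Tendsto (fun n => y + h n) atTop (𝓝[≠] y) := by
      apply tendsto_nhdsWithin_of_tendsto_nhds_of_eventually_within
      · simpa using (tendsto_const_nhds.add hh0)
      · exact Eventually.of_forall fun n => by
          simp [mem_compl_singleton_iff]; positivity
    have h2 := (hasDerivAt_iff_tendsto_slope.mp hd).comp h1
    have : (fun n => slope Φ y (y + h n)) = fun n => (Φ (y + h n) - Φ y) / h n := by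
      funext n; rw [slope_def_field, add_sub_cancel_left]
    rwa [Function.comp_def, this] at h2
  set Φ : ℝ → ℝ := fun y => ∫ t in a..y, G t with hΦ
  have hΦd : ∀ y, HasDerivAt Φ (G y) y := fun y =>
    (hGcont.integral_hasStrictDerivAt a y).hasDerivAt
  have key : ∀ n, (∫ x in a..b, (G (x + h n) - G x) / h n)
      = (Φ (b + h n) - Φ b) / h n - (Φ (a + h n) - Φ a) / h n := by
    intro n
    have hint : ∀ u v : ℝ, IntervalIntegrable G volume u v := fun u v =>
      hGcont.intervalIntegrable u v
    have e1 : (∫ x in a..b, (G (x + h n) - G x) / h n)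
        = ((∫ x in a..b, G (x + h n)) - ∫ x in a..b, G x) / h n := by
      have hc2 : Continuous fun x : ℝ => G (x + h n) := hGcont.comp (by continuity)
      rw [← intervalIntegral.integral_sub (hc2.intervalIntegrable a b) (hint a b)]
      simp [div_eq_mul_inv, intervalIntegral.integral_mul_const]
    have e2 : (∫ x in a..b, G (x + h n)) = ∫ x in a + h n..b + h n, G x :=
      intervalIntegral.integral_comp_add_right G (h n)
    have e3 : (∫ x in a + h n..b + h n, G x) = Φ (b + h n) - Φ (a + h n) := by
      have q1 : Φ (a + h n) + (∫ x in a + h n..b + h n, G x) = Φ (b + h n) :=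
        intervalIntegral.integral_add_adjacent_intervals (hint a (a + h n))
          (hint (a + h n) (b + h n))
      linarith
    have e4 : (∫ x in a..b, G x) = Φ b - Φ a := by
      have : Φ a = 0 := by simp [hΦ]
      simp [hΦ, this]
    rw [e1, e2, e3, e4]; ring
  have lim1 : Tendsto (fun n => ∫ x in a..b, (G (x + h n) - G x) / h n) atTop
      (𝓝 (G b - G a)) := by
    simp_rw [key]
    have t1 := slope_tendsto Φ b (G b) (hΦd b)
    have t2 := slope_tendsto Φ a (G a) (hΦd a)
    exact t1.sub t2
  have lim2 : Tendsto (fun n => ∫ x in a..b, (G (x + h n) - G x) / h n) atTop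
      (𝓝 (∫ x in a..b, g x)) := by
    apply intervalIntegral.tendsto_integral_filter_of_dominated_convergence (fun _ => K)
    · exact Eventually.of_forall fun n =>
        (((hGcont.comp (by continuity)).sub hGcont).div_const _).aestronglyMeasurable
    · refine Eventually.of_forall fun n => Eventually.of_forall fun x _ => ?_
      rw [norm_div, Real.norm_eq_abs, Real.norm_eq_abs, abs_of_pos (hpos n),
        div_le_iff₀ (hpos n)]
      calc |G (x + h n) - G x| ≤ K * |x + h n - x| := hlip _ _
        _ = K * h n := by rw [add_sub_cancel_left, abs_of_pos (hpos n)]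
    · exact intervalIntegrable_const
    · filter_upwards [hderiv] with x hx _
      have := slope_tendsto G x (g x) hx
      simpa using this
  exact tendsto_nhds_unique lim2 lim1

set_option maxHeartbeats 4000000 in
theorem stmt7
    (S : ℝ) (hS : 0 < S)
    (C Sg c s : ℝ → ℝ)
    (hC_lip : ∃ K : NNReal, LipschitzWith K C)
    (hSg_lip : ∃ K : NNReal, LipschitzWith K Sg)
    (hC_per : Function.Periodic C (2 * S))
    (hSg_per : Function.Periodic Sg (2 * S))
    (hc_meas : Measurable c) (hs_meas : Measurable s)
    (hc_bdd : ∃ B : ℝ, ∀ θ, |c θ| ≤ B) (hs_bdd : ∃ B : ℝ, ∀ θ, |s θ| ≤ B)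
    (hconv : ∀ᵐ θ ∂(volume : Measure ℝ), HasDerivAt C (-(s θ)) θ ∧ HasDerivAt Sg (c θ) θ ∧
      c θ * C θ + s θ * Sg θ = 1)
    (M : ℝ) (hM : IsGreatest (C '' Set.Icc 0 (2 * S)) M)
    (L F : ℝ → ℝ)
    (hL : ∀ l : ℝ, M < l → L l = ∫ θ in (0:ℝ)..(2*S), 1 / (l - C θ))
    (hF : ∀ l : ℝ, M < l → F l = ∫ θ in (0:ℝ)..(2*S), c θ / (l - C θ))
    (hM0 : 0 < M) :
    StrictAntiOn F (Set.Ioi M) ∧ StrictConvexOn ℝ (Set.Ioi M) F ∧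
      Tendsto F atTop (𝓝 0) ∧ Tendsto F (𝓝[>] M) atTop := by
  set T : ℝ := 2 * S with hTdef
  have hT : 0 < T := by positivity
  -- real Lipschitz constants
  obtain ⟨Kc', hKc'⟩ := hC_lip
  obtain ⟨Ks', hKs'⟩ := hSg_lip
  set Kc : ℝ := (Kc' : ℝ) + 1 with hKcdef
  set Ks : ℝ := (Ks' : ℝ) + 1 with hKsdef
  have hKc0 : 0 < Kc := by positivity
  have hKs0 : 0 < Ks := by positivity
  have lipC : ∀ x y, |C x - C y| ≤ Kc * |x - y| := by
    intro x y
    have := hKc'.dist_le_mul x y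
    rw [Real.dist_eq, Real.dist_eq] at this
    refine this.trans ?_
    have : (Kc' : ℝ) ≤ Kc := by simp [hKcdef]
    nlinarith [abs_nonneg (x - y)]
  have lipSg : ∀ x y, |Sg x - Sg y| ≤ Ks * |x - y| := by
    intro x y
    have := hKs'.dist_le_mul x y
    rw [Real.dist_eq, Real.dist_eq] at this
    refine this.trans ?_
    have : (Ks' : ℝ) ≤ Ks := by simp [hKsdef]
    nlinarith [abs_nonneg (x - y)]
  have hCcont : Continuous C := hKc'.continuous
  have hSgcont : Continuous Sg := hKs'.continuous
  -- C ≤ M everywhere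
  have hCM : ∀ θ, C θ ≤ M := by
    intro θ
    obtain ⟨y, hy, hxy⟩ := hC_per.exists_mem_Ico₀ (by positivity) θ
    rw [hxy]
    exact hM.2 ⟨y, ⟨hy.1, hy.2.le⟩, rfl⟩
  -- bound for Sg
  obtain ⟨Bsg0, hBsg0⟩ : ∃ B, ∀ x ∈ Icc (0:ℝ) T, ‖Sg x‖ ≤ B :=
    isCompact_Icc.exists_bound_of_continuousOn hSgcont.continuousOn
  have hBsg : ∀ θ, |Sg θ| ≤ |Bsg0| + 1 := by
    intro θ
    obtain ⟨y, hy, hxy⟩ := hSg_per.exists_mem_Ico₀ (by positivity) θ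
    rw [hxy]
    have := hBsg0 y ⟨hy.1, hy.2.le⟩
    rw [Real.norm_eq_abs] at this
    calc |Sg y| ≤ Bsg0 := this
      _ ≤ |Bsg0| + 1 := by have := le_abs_self Bsg0; linarith
  set Bsg : ℝ := |Bsg0| + 1 with hBsgdef
  have hBsgpos : 0 < Bsg := by positivity
  obtain ⟨Bc0, hBc0⟩ := hc_bdd
  set Bc : ℝ := |Bc0| + 1 with hBcdef
  have hBc : ∀ θ, |c θ| ≤ Bc := fun θ => by
    have := hBc0 θ; have := le_abs_self Bc0; simp only [hBcdef]; linarith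
  have hBcpos : 0 < Bc := by positivity
  -- positivity of denominators
  have hden : ∀ l : ℝ, M < l → ∀ θ, 0 < l - C θ := by
    intro l hl θ; have := hCM θ; linarith
  -- integrability of bounded measurable functions
  have intable : ∀ (f : ℝ → ℝ), Measurable f → (∃ B : ℝ, ∀ θ, |f θ| ≤ B) →
      ∀ x y : ℝ, IntervalIntegrable f volume x y := by
    intro f hfm ⟨B, hB⟩ x y
    rw [intervalIntegrable_iff]
    have hconst : IntegrableOn (fun _ : ℝ => B) (Set.uIoc x y) volume :=
      integrableOn_const (measure_Ioc_lt_top).ne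
    refine Integrable.mono' hconst hfm.aestronglyMeasurable ?_
    exact Eventually.of_forall fun θ => by rw [Real.norm_eq_abs]; exact hB θ
  -- the integrals
  set I2 : ℝ → ℝ := fun l => ∫ θ in (0:ℝ)..T, ((l - C θ)⁻¹) ^ 2 with hI2def
  set I3 : ℝ → ℝ := fun l => ∫ θ in (0:ℝ)..T, ((l - C θ)⁻¹) ^ 3 with hI3def
  set J2 : ℝ → ℝ := fun l => ∫ θ in (0:ℝ)..T, c θ * ((l - C θ)⁻¹) ^ 2 with hJ2def
  set J3 : ℝ → ℝ := fun l => ∫ θ in (0:ℝ)..T, c θ * ((l - C θ)⁻¹) ^ 3 with hJ3def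
  set Ffun : ℝ → ℝ := fun l => ∫ θ in (0:ℝ)..T, c θ * (l - C θ)⁻¹ with hFfundef
  set Lfun : ℝ → ℝ := fun l => ∫ θ in (0:ℝ)..T, (l - C θ)⁻¹ with hLfundef
  -- pointwise measurability/boundedness of integrands
  have meas_un : ∀ (l : ℝ) (n : ℕ), Measurable (fun θ => ((l - C θ)⁻¹) ^ n) := by
    intro l n
    exact (((measurable_const.sub hCcont.measurable)).inv.pow_const n)
  have bdd_un : ∀ (l : ℝ), M < l → ∀ (n : ℕ) θ, |((l - C θ)⁻¹) ^ n| ≤ ((l - M)⁻¹) ^ n := by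
    intro l hl n θ
    have h1 : 0 < l - C θ := hden l hl θ
    have h2 : 0 < l - M := by linarith
    rw [abs_pow, abs_of_pos (inv_pos.mpr h1)]
    exact pow_le_pow_left₀ (by positivity) (by
      apply inv_anti₀ h2; linarith [hCM θ]) n
  have int_un : ∀ (l : ℝ), M < l → ∀ (n : ℕ) (x y : ℝ),
      IntervalIntegrable (fun θ => ((l - C θ)⁻¹) ^ n) volume x y := by
    intro l hl n x y
    exact intable _ (meas_un l n) ⟨((l - M)⁻¹) ^ n, bdd_un l hl n⟩ x y
  have int_wun : ∀ (w : ℝ → ℝ), Measurable w → (∀ θ, |w θ| ≤ Bc) →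
      ∀ (l : ℝ), M < l → ∀ (n : ℕ) (x y : ℝ),
      IntervalIntegrable (fun θ => w θ * ((l - C θ)⁻¹) ^ n) volume x y := by
    intro w hwm hwB l hl n x y
    refine intable _ (hwm.mul (meas_un l n)) ⟨Bc * ((l - M)⁻¹) ^ n, fun θ => ?_⟩ x y
    rw [Pi.mul_apply, abs_mul]
    exact mul_le_mul (hwB θ) (bdd_un l hl n θ) (abs_nonneg _) hBcpos.le
  have hBc1 : ∀ θ : ℝ, |(fun _ : ℝ => (1:ℝ)) θ| ≤ Bc := fun θ => by
    simp only [abs_one, hBcdef]; have := abs_nonneg Bc0; linarith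
  have int_cun : ∀ (l : ℝ), M < l → ∀ (n : ℕ) (x y : ℝ),
      IntervalIntegrable (fun θ => c θ * ((l - C θ)⁻¹) ^ n) volume x y :=
    int_wun c hc_meas hBc
  -- KEY IDENTITY 1 : l * J2 l = I2 l
  have key1 : ∀ l : ℝ, M < l → l * J2 l = I2 l := by
    intro l hl
    set e : ℝ := l - M with hedef
    have he : 0 < e := by simp only [hedef]; linarith
    have hfl : ∀ θ, e ≤ l - C θ := fun θ => by have := hCM θ; simp only [hedef]; linarith
    have lipV : ∀ x y, |(l - C x) - (l - C y)| ≤ Kc * |x - y| := by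
      intro x y; have := lipC x y; rw [show (l - C x) - (l - C y) = -(C x - C y) by ring, abs_neg]
      exact this
    have lipU : ∀ x y, |(l - C x)⁻¹ - (l - C y)⁻¹| ≤ Kc / e ^ 2 * |x - y| :=
      lip_inv he hfl lipV
    have bU : ∀ θ, |(l - C θ)⁻¹| ≤ e⁻¹ := by
      intro θ; have := bdd_un l hl 1 θ; simpa using this
    have hzero : (∫ θ in (0:ℝ)..T, (l * (c θ * ((l - C θ)⁻¹) ^ 2) - ((l - C θ)⁻¹) ^ 2)) = 0 := by
      have hlipG := lip_mul lipSg lipU hBsg bU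
      have hKnn : (0:ℝ) ≤ Bsg * (Kc / e ^ 2) + Ks * e⁻¹ := by positivity
      have hder : ∀ᵐ θ ∂(volume : Measure ℝ), HasDerivAt (fun θ => Sg θ * (l - C θ)⁻¹)
          (l * (c θ * ((l - C θ)⁻¹) ^ 2) - ((l - C θ)⁻¹) ^ 2) θ := by
        filter_upwards [hconv] with θ ⟨h1, h2, h3⟩
        have hne : l - C θ ≠ 0 := (hden l hl θ).ne'
        have hv : HasDerivAt (fun θ => l - C θ) (s θ) θ := by
          have := (hasDerivAt_const θ l).sub h1; rw [zero_sub, neg_neg] at this; exact this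
        have hu := hv.inv hne
        have hG := h2.mul hu
        have hv3 : (l - C θ) * (l - C θ)⁻¹ = 1 := mul_inv_cancel₀ hne
        have keyeq : l * (c θ * ((l - C θ)⁻¹) ^ 2) - ((l - C θ)⁻¹) ^ 2
            = c θ * (l - C θ)⁻¹ + Sg θ * (-s θ / (l - C θ) ^ 2) := by
          rw [div_eq_mul_inv, ← inv_pow]
          linear_combination ((l - C θ)⁻¹) ^ 2 * h3 + c θ * (l - C θ)⁻¹ * hv3
        rw [keyeq]
        exact hG
      rw [ftc_lip hKnn hlipG hder 0 T]
      have e1 : Sg T = Sg 0 := by simpa using hSg_per 0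
      have e2 : C T = C 0 := by simpa using hC_per 0
      rw [e1, e2]; ring
    have hsplit : (∫ θ in (0:ℝ)..T, (l * (c θ * ((l - C θ)⁻¹) ^ 2) - ((l - C θ)⁻¹) ^ 2))
        = l * J2 l - I2 l := by
      rw [intervalIntegral.integral_sub ((int_cun l hl 2 0 T).const_mul l) (int_un l hl 2 0 T),
        intervalIntegral.integral_const_mul]
    rw [hsplit] at hzero
    linarith
  -- KEY IDENTITY 2 : 2 * l * J3 l = J2 l + 2 * I3 l
  have key2 : ∀ l : ℝ, M < l → 2 * l * J3 l = J2 l + 2 * I3 l := by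
    intro l hl
    set e : ℝ := l - M with hedef
    have he : 0 < e := by simp only [hedef]; linarith
    have hfl : ∀ θ, e ≤ l - C θ := fun θ => by have := hCM θ; simp only [hedef]; linarith
    have lipV : ∀ x y, |(l - C x) - (l - C y)| ≤ Kc * |x - y| := by
      intro x y; have := lipC x y; rw [show (l - C x) - (l - C y) = -(C x - C y) by ring, abs_neg]
      exact this
    have lipU : ∀ x y, |(l - C x)⁻¹ - (l - C y)⁻¹| ≤ Kc / e ^ 2 * |x - y| :=
      lip_inv he hfl lipV
    have bU : ∀ θ, |(l - C θ)⁻¹| ≤ e⁻¹ := by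
      intro θ; have := bdd_un l hl 1 θ; simpa using this
    have lipU2 : ∀ x y, |((l - C x)⁻¹) ^ 2 - ((l - C y)⁻¹) ^ 2|
        ≤ (e⁻¹ * (Kc / e ^ 2) + Kc / e ^ 2 * e⁻¹) * |x - y| := by
      intro x y
      have := lip_mul lipU lipU bU bU x y
      simpa [pow_two] using this
    have bU2 : ∀ θ, |((l - C θ)⁻¹) ^ 2| ≤ (e⁻¹) ^ 2 := fun θ => bdd_un l hl 2 θ
    have hzero : (∫ θ in (0:ℝ)..T,
        (2 * l * (c θ * ((l - C θ)⁻¹) ^ 3) - c θ * ((l - C θ)⁻¹) ^ 2 - 2 * ((l - C θ)⁻¹) ^ 3))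
        = 0 := by
      have hlipG := lip_mul lipSg lipU2 hBsg bU2
      have hKnn : (0:ℝ) ≤ Bsg * (e⁻¹ * (Kc / e ^ 2) + Kc / e ^ 2 * e⁻¹) + Ks * e⁻¹ ^ 2 := by
        positivity
      have hder : ∀ᵐ θ ∂(volume : Measure ℝ), HasDerivAt (fun θ => Sg θ * ((l - C θ)⁻¹) ^ 2)
          (2 * l * (c θ * ((l - C θ)⁻¹) ^ 3) - c θ * ((l - C θ)⁻¹) ^ 2
            - 2 * ((l - C θ)⁻¹) ^ 3) θ := by
        filter_upwards [hconv] with θ ⟨h1, h2, h3⟩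
        have hne : l - C θ ≠ 0 := (hden l hl θ).ne'
        have hv : HasDerivAt (fun θ => l - C θ) (s θ) θ := by
          have := (hasDerivAt_const θ l).sub h1; rw [zero_sub, neg_neg] at this; exact this
        have hu := hv.inv hne
        have hu2 := hu.pow 2
        have hG : HasDerivAt (fun θ => Sg θ * ((l - C θ)⁻¹) ^ 2)
            (c θ * ((l - C θ)⁻¹) ^ 2
              + Sg θ * (2 * (l - C θ)⁻¹ * (-s θ / (l - C θ) ^ 2))) θ := by
          have := h2.mul hu2
          refine this.congr_deriv ?_; norm_num
        have hv3 : (l - C θ) * (l - C θ)⁻¹ = 1 := mul_inv_cancel₀ hne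
        have keyeq : 2 * l * (c θ * ((l - C θ)⁻¹) ^ 3) - c θ * ((l - C θ)⁻¹) ^ 2
              - 2 * ((l - C θ)⁻¹) ^ 3
            = c θ * ((l - C θ)⁻¹) ^ 2
              + Sg θ * (2 * (l - C θ)⁻¹ * (-s θ / (l - C θ) ^ 2)) := by
          rw [div_eq_mul_inv, ← inv_pow]
          linear_combination 2 * ((l - C θ)⁻¹) ^ 3 * h3
            + 2 * c θ * ((l - C θ)⁻¹) ^ 2 * hv3
        rw [keyeq]
        exact hG
      rw [ftc_lip hKnn hlipG hder 0 T]
      have e1 : Sg T = Sg 0 := by simpa using hSg_per 0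
      have e2 : C T = C 0 := by simpa using hC_per 0
      rw [e1, e2]; ring
    have hsplit : (∫ θ in (0:ℝ)..T,
        (2 * l * (c θ * ((l - C θ)⁻¹) ^ 3) - c θ * ((l - C θ)⁻¹) ^ 2 - 2 * ((l - C θ)⁻¹) ^ 3))
        = 2 * l * J3 l - J2 l - 2 * I3 l := by
      rw [intervalIntegral.integral_sub
          (((int_cun l hl 3 0 T).const_mul (2 * l)).sub (int_cun l hl 2 0 T))
          ((int_un l hl 3 0 T).const_mul 2),
        intervalIntegral.integral_sub ((int_cun l hl 3 0 T).const_mul (2 * l))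
          (int_cun l hl 2 0 T),
        intervalIntegral.integral_const_mul, intervalIntegral.integral_const_mul]
    rw [hsplit] at hzero
    linarith
  -- positivity of I2, I3
  have I2pos : ∀ l : ℝ, M < l → 0 < I2 l := by
    intro l hl
    exact intervalIntegral.intervalIntegral_pos_of_pos_on (int_un l hl 2 0 T)
      (fun θ _ => pow_pos (inv_pos.mpr (hden l hl θ)) 2) hT
  have I3pos : ∀ l : ℝ, M < l → 0 < I3 l := by
    intro l hl
    exact intervalIntegral.intervalIntegral_pos_of_pos_on (int_un l hl 3 0 T)
      (fun θ _ => pow_pos (inv_pos.mpr (hden l hl θ)) 3) hT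
  have J2pos : ∀ l : ℝ, M < l → 0 < J2 l := by
    intro l hl
    have hl0 : 0 < l := lt_trans hM0 hl
    have := key1 l hl
    have := I2pos l hl
    nlinarith
  have J3pos : ∀ l : ℝ, M < l → 0 < J3 l := by
    intro l hl
    have hl0 : 0 < l := lt_trans hM0 hl
    have := key2 l hl
    have := I3pos l hl
    have := J2pos l hl
    nlinarith
  -- parametric derivatives
  have param : ∀ (w : ℝ → ℝ), Measurable w → (∀ θ, |w θ| ≤ Bc) → ∀ (n : ℕ), 0 < n →
      ∀ (l₀ : ℝ), M < l₀ →
      HasDerivAt (fun l => ∫ θ in (0:ℝ)..T, w θ * ((l - C θ)⁻¹) ^ n)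
        (-(n:ℝ) * ∫ θ in (0:ℝ)..T, w θ * ((l₀ - C θ)⁻¹) ^ (n + 1)) l₀ := by
    intro w hwm hwB n hn l₀ hl₀
    set ε : ℝ := (l₀ - M) / 2 with hεdef
    have hεpos : 0 < ε := by simp only [hεdef]; linarith
    have hball : ∀ x ∈ Metric.ball l₀ ε, M + ε ≤ x := by
      intro x hx
      rw [Metric.mem_ball, Real.dist_eq] at hx
      have h := abs_lt.mp hx
      have : l₀ = M + 2 * ε := by simp only [hεdef]; ring
      linarith [h.1]
    have hballM : ∀ x ∈ Metric.ball l₀ ε, M < x := fun x hx => by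
      have := hball x hx; linarith
    have main := intervalIntegral.hasDerivAt_integral_of_dominated_loc_of_deriv_le
      (F := fun x θ => w θ * ((x - C θ)⁻¹) ^ n)
      (F' := fun x θ => -(n : ℝ) * (w θ * ((x - C θ)⁻¹) ^ (n + 1)))
      (bound := fun _ => (n : ℝ) * (Bc * (ε⁻¹) ^ (n + 1)))
      (a := (0:ℝ)) (b := T) (μ := volume) (x₀ := l₀) (Metric.ball_mem_nhds l₀ hεpos)
      (Eventually.of_forall fun x =>
        ((hwm.mul (meas_un x n)).aestronglyMeasurable).restrict)
      (int_wun w hwm hwB l₀ hl₀ n 0 T)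
      (((measurable_const.mul (hwm.mul (meas_un l₀ (n + 1)))).aestronglyMeasurable).restrict)
      ?_ intervalIntegrable_const ?_
    · have h2 := main.2
      rwa [intervalIntegral.integral_const_mul] at h2
    · refine Eventually.of_forall fun θ _ x hx => ?_
      have hMx : M < x := hballM x hx
      have hxe : ε ≤ x - M := by have := hball x hx; linarith
      have h1 : |((x - C θ)⁻¹) ^ (n + 1)| ≤ ((x - M)⁻¹) ^ (n + 1) := bdd_un x hMx (n + 1) θ
      have h2 : ((x - M)⁻¹) ^ (n + 1) ≤ (ε⁻¹) ^ (n + 1) :=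
        pow_le_pow_left₀ (inv_nonneg.2 (by linarith)) (inv_anti₀ hεpos hxe) _
      rw [Real.norm_eq_abs, abs_mul, abs_neg, Nat.abs_cast, abs_mul]
      have hmm : |w θ| * |((x - C θ)⁻¹) ^ (n + 1)| ≤ Bc * (ε⁻¹) ^ (n + 1) :=
        mul_le_mul (hwB θ) (h1.trans h2) (abs_nonneg _) hBcpos.le
      exact mul_le_mul_of_nonneg_left hmm (Nat.cast_nonneg n)
    · refine Eventually.of_forall fun θ _ x hx => ?_
      have hMx : M < x := hballM x hx
      have hne : x - C θ ≠ 0 := (hden x hMx θ).ne'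
      have hv : HasDerivAt (fun x : ℝ => x - C θ) 1 x := (hasDerivAt_id x).sub_const _
      have hu : HasDerivAt (fun x : ℝ => (x - C θ)⁻¹) (-1 / (x - C θ) ^ 2) x := hv.inv hne
      have hp := hu.pow n
      have hG := hp.const_mul (w θ)
      have hpow : ((x - C θ)⁻¹) ^ (n - 1) * ((x - C θ)⁻¹) ^ 2 = ((x - C θ)⁻¹) ^ (n + 1) := by
        rw [← pow_add]; congr 1; omega
      have heq : w θ * ((n : ℝ) * ((x - C θ)⁻¹) ^ (n - 1) * (-1 / (x - C θ) ^ 2))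
          = -(n : ℝ) * (w θ * ((x - C θ)⁻¹) ^ (n + 1)) := by
        rw [div_eq_mul_inv, ← inv_pow]
        linear_combination (-(n : ℝ) * w θ) * hpow
      rw [heq] at hG
      exact hG
  -- derivative of F
  have hFderiv : ∀ l : ℝ, M < l → HasDerivAt F (-(J2 l)) l := by
    intro l hl
    have h1 := param c hc_meas hBc 1 one_pos l hl
    simp only [pow_one, Nat.cast_one, neg_mul, one_mul] at h1
    have heq : F =ᶠ[𝓝 l] fun x => ∫ θ in (0:ℝ)..T, c θ * (x - C θ)⁻¹ := by
      filter_upwards [Ioi_mem_nhds hl] with x hx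
      rw [hF x hx]
      simp only [div_eq_mul_inv]
    exact h1.congr_of_eventuallyEq heq
  have hLderiv : ∀ l : ℝ, M < l → HasDerivAt L (-(I2 l)) l := by
    intro l hl
    have h1 := param (fun _ => (1:ℝ)) measurable_const hBc1 1 one_pos l hl
    simp only [pow_one, Nat.cast_one, neg_mul, one_mul] at h1
    have heq : L =ᶠ[𝓝 l] fun x => ∫ θ in (0:ℝ)..T, (x - C θ)⁻¹ := by
      filter_upwards [Ioi_mem_nhds hl] with x hx
      rw [hL x hx]
      simp only [one_div]
    exact h1.congr_of_eventuallyEq heq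
  have hJ2deriv : ∀ l : ℝ, M < l → HasDerivAt J2 (-2 * J3 l) l := by
    intro l hl
    have h1 := param c hc_meas hBc 2 two_pos l hl
    push_cast at h1
    exact h1
  -- continuity of F on Ioi M
  have hFcont : ContinuousOn F (Ioi M) := fun x hx =>
    ((hFderiv x hx).continuousAt).continuousWithinAt
  -- part 1 : strict anti
  have part1 : StrictAntiOn F (Set.Ioi M) := by
    apply strictAntiOn_of_deriv_neg (convex_Ioi M) hFcont
    intro x hx
    rw [interior_Ioi] at hx
    rw [(hFderiv x hx).deriv]
    have := J2pos x hx
    linarith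
  -- part 2 : strict convex
  have part2 : StrictConvexOn ℝ (Set.Ioi M) F := by
    apply strictConvexOn_of_deriv2_pos (convex_Ioi M) hFcont
    intro x hx
    rw [interior_Ioi] at hx
    have hx0 : 0 < x := lt_trans hM0 hx
    have hd1 : deriv F =ᶠ[𝓝 x] fun y => -(J2 y) := by
      filter_upwards [Ioi_mem_nhds hx] with y hy
      exact (hFderiv y hy).deriv
    have h2 : deriv (deriv F) x = deriv (fun y => -(J2 y)) x := hd1.deriv_eq
    have h3 : HasDerivAt (fun y => -(J2 y)) (-(-2 * J3 x)) x := (hJ2deriv x hx).neg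
    have h4 : deriv (fun y => -(J2 y)) x = 2 * J3 x := by
      rw [h3.deriv]; ring
    have : deriv (deriv F) x = 2 * J3 x := by rw [h2, h4]
    show 0 < deriv^[2] F x
    have hit : deriv^[2] F x = deriv (deriv F) x := by
      simp [Function.iterate_succ, Function.iterate_zero, Function.comp]
    rw [hit, this]
    have := J3pos x hx
    linarith
  -- part 3 : tendsto 0 at top
  have part3 : Tendsto F atTop (𝓝 0) := by
    apply squeeze_zero_norm' (a := fun l => Bc * (l - M)⁻¹ * T)
    · filter_upwards [eventually_gt_atTop M] with l hl
      rw [hF l hl]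
      have hb : ∀ θ ∈ Set.uIoc (0:ℝ) T, ‖c θ / (l - C θ)‖ ≤ Bc * (l - M)⁻¹ := by
        intro θ _
        rw [Real.norm_eq_abs, div_eq_mul_inv, abs_mul]
        have h1 : |(l - C θ)⁻¹| ≤ (l - M)⁻¹ := by
          have := bdd_un l hl 1 θ; simpa using this
        exact mul_le_mul (hBc θ) h1 (abs_nonneg _) hBcpos.le
      have := intervalIntegral.norm_integral_le_of_norm_le_const hb
      rwa [sub_zero, abs_of_pos hT] at this
    · have h1 : Tendsto (fun l : ℝ => l - M) atTop atTop :=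
        tendsto_atTop_add_const_right _ (-M) tendsto_id
      have h2 : Tendsto (fun l : ℝ => (l - M)⁻¹) atTop (𝓝 0) :=
        tendsto_inv_atTop_zero.comp h1
      have h3 := (h2.const_mul Bc).mul_const T
      simpa using h3
  -- part 4 : tendsto atTop at M+
  have part4 : Tendsto F (𝓝[>] M) atTop := by
    have hM1 : M < M + 1 := by linarith
    have hM10 : (0:ℝ) < M + 1 := by linarith
    obtain ⟨θ₀, hθ₀mem, hθ₀⟩ := hM.1
    have hθ₀0 : 0 ≤ θ₀ := hθ₀mem.1
    have hθ₀T : θ₀ ≤ T := hθ₀mem.2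
    -- lower bound for L
    have Llb : ∀ l : ℝ, M < l →
        (Real.log (Kc * S) - Real.log (l - M)) / Kc ≤ L l := by
      intro l hl
      set e : ℝ := l - M with hedef
      have he : 0 < e := by simp only [hedef]; linarith
      have hauxint : IntervalIntegrable (fun u : ℝ => (e + Kc * u)⁻¹) volume 0 S := by
        apply ContinuousOn.intervalIntegrable
        rw [uIcc_of_le hS.le]
        apply ContinuousOn.inv₀
        · exact (continuous_const.add (continuous_const.mul continuous_id)).continuousOn
        · intro u hu
          have h0u : 0 ≤ u := hu.1
          nlinarith
      have hexp : ∫ u in (0:ℝ)..S, (e + Kc * u)⁻¹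
          = (Real.log (e + Kc * S) - Real.log e) / Kc := by
        have hderiv : ∀ u ∈ uIcc (0:ℝ) S,
            HasDerivAt (fun u => Real.log (e + Kc * u) / Kc) ((e + Kc * u)⁻¹) u := by
          intro u hu
          rw [uIcc_of_le hS.le] at hu
          have hupos : 0 < e + Kc * u := by nlinarith [hu.1]
          have h1 : HasDerivAt (fun u : ℝ => e + Kc * u) Kc u := by
            simpa using ((hasDerivAt_id u).const_mul Kc).const_add e
          have h2 := (h1.log hupos.ne').div_const Kc
          refine h2.congr_deriv ?_
          rw [div_right_comm, div_self hKc0.ne', one_div]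
        rw [intervalIntegral.integral_eq_sub_of_hasDerivAt hderiv hauxint]
        rw [mul_zero, add_zero]
        ring
      have uint : ∀ x y : ℝ, IntervalIntegrable (fun θ => (l - C θ)⁻¹) volume x y := by
        intro x y
        have := int_un l hl 1 x y
        simpa using this
      have nonneg : ∀ x y : ℝ, x ≤ y → 0 ≤ ∫ θ in x..y, (l - C θ)⁻¹ := fun x y hxy =>
        intervalIntegral.integral_nonneg hxy (fun θ _ => (inv_nonneg.2 (hden l hl θ).le))
      have hLsplit : ∀ p q : ℝ, 0 ≤ p → p ≤ q → q ≤ T →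
          (∫ θ in p..q, (l - C θ)⁻¹) ≤ L l := by
        intro p q h0 hpq hqT
        have hLeq : L l = ∫ θ in (0:ℝ)..T, (l - C θ)⁻¹ := by
          rw [hL l hl]; simp only [one_div]
        have e1 := intervalIntegral.integral_add_adjacent_intervals (uint 0 p) (uint p q)
        have e2 := intervalIntegral.integral_add_adjacent_intervals (uint 0 q) (uint q T)
        have n1 := nonneg 0 p h0
        have n2 := nonneg q T hqT
        rw [hLeq]
        linarith
      have hintc : ∀ p : ℝ, IntervalIntegrable (fun u : ℝ => (l - C (u + p))⁻¹) volume 0 S := by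
        intro p
        apply ContinuousOn.intervalIntegrable
        apply ContinuousOn.inv₀
        · exact (continuous_const.sub (hCcont.comp (by continuity))).continuousOn
        · exact fun u _ => (hden l hl (u + p)).ne'
      have hintc2 : IntervalIntegrable (fun u : ℝ => (l - C (θ₀ - u))⁻¹) volume 0 S := by
        apply ContinuousOn.intervalIntegrable
        apply ContinuousOn.inv₀
        · exact (continuous_const.sub (hCcont.comp (by continuity))).continuousOn
        · exact fun u _ => (hden l hl (θ₀ - u)).ne'
      have hLge : (∫ u in (0:ℝ)..S, (e + Kc * u)⁻¹) ≤ L l := by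
        rcases le_or_gt θ₀ S with hcase | hcase
        · -- use [θ₀, θ₀ + S]
          have mono : (∫ u in (0:ℝ)..S, (e + Kc * u)⁻¹)
              ≤ ∫ u in (0:ℝ)..S, (l - C (u + θ₀))⁻¹ := by
            apply intervalIntegral.integral_mono_on hS.le hauxint (hintc θ₀)
            intro u hu
            have h0u : 0 ≤ u := hu.1
            have hlip := lipC θ₀ (u + θ₀)
            have habs : |θ₀ - (u + θ₀)| = u := by
              rw [show θ₀ - (u + θ₀) = -u by ring, abs_neg, abs_of_nonneg h0u]
            rw [habs] at hlip
            have h1 : M - C (u + θ₀) ≤ Kc * u := by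
              have h := le_abs_self (C θ₀ - C (u + θ₀))
              rw [← hθ₀]
              linarith
            have h2 : 0 < l - C (u + θ₀) := hden l hl (u + θ₀)
            have h3 : l - C (u + θ₀) ≤ e + Kc * u := by
              simp only [hedef]; linarith
            exact inv_anti₀ h2 h3
          have shift : (∫ u in (0:ℝ)..S, (l - C (u + θ₀))⁻¹)
              = ∫ θ in θ₀..(θ₀ + S), (l - C θ)⁻¹ := by
            have h := intervalIntegral.integral_comp_add_right
              (a := (0:ℝ)) (b := S) (fun θ => (l - C θ)⁻¹) θ₀
            rw [zero_add] at h
            rw [show θ₀ + S = S + θ₀ by ring]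
            exact h
          rw [shift] at mono
          exact mono.trans (hLsplit θ₀ (θ₀ + S) hθ₀0 (by linarith) (by rw [hTdef]; linarith))
        · -- use [θ₀ - S, θ₀]
          have mono : (∫ u in (0:ℝ)..S, (e + Kc * u)⁻¹)
              ≤ ∫ u in (0:ℝ)..S, (l - C (θ₀ - u))⁻¹ := by
            apply intervalIntegral.integral_mono_on hS.le hauxint hintc2
            intro u hu
            have h0u : 0 ≤ u := hu.1
            have hlip := lipC θ₀ (θ₀ - u)
            have habs : |θ₀ - (θ₀ - u)| = u := by
              rw [show θ₀ - (θ₀ - u) = u by ring, abs_of_nonneg h0u]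
            rw [habs] at hlip
            have h1 : M - C (θ₀ - u) ≤ Kc * u := by
              have h := le_abs_self (C θ₀ - C (θ₀ - u))
              rw [← hθ₀]
              linarith
            have h2 : 0 < l - C (θ₀ - u) := hden l hl (θ₀ - u)
            have h3 : l - C (θ₀ - u) ≤ e + Kc * u := by
              simp only [hedef]; linarith
            exact inv_anti₀ h2 h3
          have shift : (∫ u in (0:ℝ)..S, (l - C (θ₀ - u))⁻¹)
              = ∫ θ in (θ₀ - S)..θ₀, (l - C θ)⁻¹ := by
            have h := intervalIntegral.integral_comp_sub_left
              (a := (0:ℝ)) (b := S) (fun θ => (l - C θ)⁻¹) θ₀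
            rw [sub_zero] at h
            exact h
          rw [shift] at mono
          exact mono.trans (hLsplit (θ₀ - S) θ₀ (by linarith) (by linarith) hθ₀T)
      have hφ : (Real.log (Kc * S) - Real.log e) / Kc
          ≤ (Real.log (e + Kc * S) - Real.log e) / Kc := by
        have hlog : Real.log (Kc * S) ≤ Real.log (e + Kc * S) :=
          (Real.log_le_log_iff (by positivity) (by positivity)).mpr (by linarith)
        have h := sub_le_sub_right hlog (Real.log e)
        exact (div_le_div_iff_of_pos_right hKc0).mpr h
      rw [hexp] at hLge
      exact hφ.trans hLge
    -- antitone comparison function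
    have hg' : ∀ x : ℝ, M < x →
        HasDerivAt (fun y => F y - L y / (M + 1)) (-(J2 x) - (-(I2 x)) / (M + 1)) x :=
      fun x hx => (hFderiv x hx).sub ((hLderiv x hx).div_const _)
    have hanti : AntitoneOn (fun y => F y - L y / (M + 1)) (Ioc M (M + 1)) := by
      apply antitoneOn_of_deriv_nonpos (convex_Ioc M (M + 1))
      · exact fun x hx => ((hg' x hx.1).continuousAt).continuousWithinAt
      · intro x hx
        rw [interior_Ioc] at hx
        exact ((hg' x hx.1).differentiableAt).differentiableWithinAt
      · intro x hx
        rw [interior_Ioc] at hx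
        rw [(hg' x hx.1).deriv]
        have hx0 : 0 < x := lt_trans hM0 hx.1
        have hk := key1 x hx.1
        have hI2 := I2pos x hx.1
        have hJ2x : J2 x = I2 x / x := by
          rw [eq_div_iff hx0.ne']
          linarith
        rw [hJ2x]
        have h1 : I2 x / (M + 1) ≤ I2 x / x :=
          div_le_div_of_nonneg_left hI2.le hx0 hx.2.le
        have h2 : (-(I2 x)) / (M + 1) = -(I2 x / (M + 1)) := neg_div _ _
        linarith
    have hbound : ∀ᶠ l in 𝓝[>] M,
        F (M + 1) - L (M + 1) / (M + 1)
          + ((Real.log (Kc * S) - Real.log (l - M)) / Kc) / (M + 1) ≤ F l := by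
      filter_upwards [Ioc_mem_nhdsGT hM1] with l hl
      have h1 := hanti hl ⟨hM1, le_refl _⟩ hl.2
      have h2 := Llb l hl.1
      have h3 : ((Real.log (Kc * S) - Real.log (l - M)) / Kc) / (M + 1)
          ≤ L l / (M + 1) := by gcongr
      simp only at h1
      linarith
    have htd : Tendsto (fun l => F (M + 1) - L (M + 1) / (M + 1)
        + ((Real.log (Kc * S) - Real.log (l - M)) / Kc) / (M + 1)) (𝓝[>] M) atTop := by
      have h1 : Tendsto (fun l : ℝ => l - M) (𝓝[>] M) (𝓝[>] 0) := by
        apply tendsto_nhdsWithin_of_tendsto_nhds_of_eventually_within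
        · have h : Tendsto (fun l : ℝ => l - M) (𝓝 M) (𝓝 0) := by
            have := (continuous_sub_right M).tendsto M
            simpa using this
          exact h.mono_left nhdsWithin_le_nhds
        · filter_upwards [self_mem_nhdsWithin] with x hx
          exact sub_pos.2 (mem_Ioi.1 hx)
      have h2 : Tendsto (fun l : ℝ => Real.log (l - M)) (𝓝[>] M) atBot :=
        Real.tendsto_log_nhdsGT_zero.comp h1
      have h3 : Tendsto (fun l : ℝ => -Real.log (l - M)) (𝓝[>] M) atTop :=
        tendsto_neg_atBot_atTop.comp h2
      have h4 : Tendsto (fun l : ℝ => Real.log (Kc * S) + -Real.log (l - M)) (𝓝[>] M) atTop :=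
        tendsto_atTop_add_const_left _ _ h3
      have h5 := h4.atTop_div_const hKc0
      have h6 := h5.atTop_div_const hM10
      have h7 := tendsto_atTop_add_const_left _ (F (M + 1) - L (M + 1) / (M + 1)) h6
      simpa [sub_eq_add_neg] using h7
    exact tendsto_atTop_mono' _ hbound htd
  exact ⟨part1, part2, part3, part4⟩
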